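/- Let d ≥ 9 be an odd integer and let n be a positive integer with 4n ≥ d³ + 3d − 4. Then there exist integers x_1, …, x_d such that x_1 + x_2 + ⋯ + x_d = 0 and 2n = ∑_{i=1}^{d} ( d·x_i² + 2(i−1)·x_i ). -/
import Mathlib

/-- Auxiliary coordinate vector for the Kiming construction. -/
def kimX (a b c1 c2 c3 c4 : ℤ) : ℕ → ℤ := fun j =>
  if j = 0 then b + c1 + c4
  else if j = 1 then a - c1 + c2
  else if j = 2 then -c3 - c4
  else if j = 3 then -c2 + c3
  else if j = 4 then -a - c1 - c2
  else if j = 5 then 1 - b + c1 - c4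
  else if j = 6 then -1 + c2 + c3
  else if j = 7 then -c3 + c4
  else 0

lemma kimX_eq_zero (a b c1 c2 c3 c4 : ℤ) {j : ℕ} (hj : 8 ≤ j) :
    kimX a b c1 c2 c3 c4 j = 0 := by
  unfold kimX
  split_ifs <;> omega

lemma sq_of_even {A : ℤ} (h : Even A) : ∃ u, A ^ 2 = 4 * u := by
  obtain ⟨k, rfl⟩ := h; exact ⟨k ^ 2, by ring⟩

lemma sq_of_odd {A : ℤ} (h : Odd A) : ∃ u, A ^ 2 = 4 * u + 1 := by
  obtain ⟨k, rfl⟩ := h; exact ⟨k ^ 2 + k, by ring⟩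

lemma sq8_of_odd {A : ℤ} (h : Odd A) : ∃ s, A ^ 2 = 8 * s + 1 := by
  obtain ⟨k, rfl⟩ := h
  obtain ⟨j, hj⟩ := Int.even_mul_succ_self k
  exact ⟨j, by linear_combination 4 * hj⟩

/-- Every nonnegative integer `≡ 4 (mod 8)` is a sum of four odd squares. -/
lemma odd_four_squares (N : ℤ) (h0 : 0 ≤ N) (h8 : N % 8 = 4) :
    ∃ w1 w2 w3 w4 : ℤ, Odd w1 ∧ Odd w2 ∧ Odd w3 ∧ Odd w4 ∧
      w1 ^ 2 + w2 ^ 2 + w3 ^ 2 + w4 ^ 2 = N := by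
  obtain ⟨a, b, c, e, h⟩ := Nat.sum_four_squares (N / 2).toNat
  have hABCE : (a : ℤ) ^ 2 + (b : ℤ) ^ 2 + (c : ℤ) ^ 2 + (e : ℤ) ^ 2 = N / 2 := by
    have h' := congrArg (Nat.cast (R := ℤ)) h
    push_cast at h'
    rw [h', Int.toNat_of_nonneg (by omega)]
  set A := (a : ℤ); set B := (b : ℤ); set C := (c : ℤ); set E := (e : ℤ)
  clear_value A B C E
  have hN2 : 2 * (N / 2) = N := by omega
  rcases Int.even_or_odd A with hA | hA <;> rcases Int.even_or_odd B with hB | hB <;>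
    rcases Int.even_or_odd C with hC | hC <;> rcases Int.even_or_odd E with hE | hE
  -- EEEE
  · exfalso
    obtain ⟨u1, e1⟩ := sq_of_even hA; obtain ⟨u2, e2⟩ := sq_of_even hB
    obtain ⟨u3, e3⟩ := sq_of_even hC; obtain ⟨u4, e4⟩ := sq_of_even hE
    rw [e1, e2, e3, e4] at hABCE; omega
  -- EEEO
  · exfalso
    obtain ⟨u1, e1⟩ := sq_of_even hA; obtain ⟨u2, e2⟩ := sq_of_even hB
    obtain ⟨u3, e3⟩ := sq_of_even hC; obtain ⟨u4, e4⟩ := sq_of_odd hE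
    rw [e1, e2, e3, e4] at hABCE; omega
  -- EEOE
  · exfalso
    obtain ⟨u1, e1⟩ := sq_of_even hA; obtain ⟨u2, e2⟩ := sq_of_even hB
    obtain ⟨u3, e3⟩ := sq_of_odd hC; obtain ⟨u4, e4⟩ := sq_of_even hE
    rw [e1, e2, e3, e4] at hABCE; omega
  -- EEOO
  · exact ⟨C + A, C - A, E + B, E - B, hC.add_even hA, hC.sub_even hA,
      hE.add_even hB, hE.sub_even hB, by linear_combination 2 * hABCE + hN2⟩
  -- EOEE
  · exfalso
    obtain ⟨u1, e1⟩ := sq_of_even hA; obtain ⟨u2, e2⟩ := sq_of_odd hB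
    obtain ⟨u3, e3⟩ := sq_of_even hC; obtain ⟨u4, e4⟩ := sq_of_even hE
    rw [e1, e2, e3, e4] at hABCE; omega
  -- EOEO
  · exact ⟨B + A, B - A, E + C, E - C, hB.add_even hA, hB.sub_even hA,
      hE.add_even hC, hE.sub_even hC, by linear_combination 2 * hABCE + hN2⟩
  -- EOOE
  · exact ⟨B + A, B - A, C + E, C - E, hB.add_even hA, hB.sub_even hA,
      hC.add_even hE, hC.sub_even hE, by linear_combination 2 * hABCE + hN2⟩
  -- EOOO
  · exfalso
    obtain ⟨u1, e1⟩ := sq_of_even hA; obtain ⟨u2, e2⟩ := sq_of_odd hB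
    obtain ⟨u3, e3⟩ := sq_of_odd hC; obtain ⟨u4, e4⟩ := sq_of_odd hE
    rw [e1, e2, e3, e4] at hABCE; omega
  -- OEEE
  · exfalso
    obtain ⟨u1, e1⟩ := sq_of_odd hA; obtain ⟨u2, e2⟩ := sq_of_even hB
    obtain ⟨u3, e3⟩ := sq_of_even hC; obtain ⟨u4, e4⟩ := sq_of_even hE
    rw [e1, e2, e3, e4] at hABCE; omega
  -- OEEO
  · exact ⟨A + B, A - B, E + C, E - C, hA.add_even hB, hA.sub_even hB,
      hE.add_even hC, hE.sub_even hC, by linear_combination 2 * hABCE + hN2⟩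
  -- OEOE
  · exact ⟨A + B, A - B, C + E, C - E, hA.add_even hB, hA.sub_even hB,
      hC.add_even hE, hC.sub_even hE, by linear_combination 2 * hABCE + hN2⟩
  -- OEOO
  · exfalso
    obtain ⟨u1, e1⟩ := sq_of_odd hA; obtain ⟨u2, e2⟩ := sq_of_even hB
    obtain ⟨u3, e3⟩ := sq_of_odd hC; obtain ⟨u4, e4⟩ := sq_of_odd hE
    rw [e1, e2, e3, e4] at hABCE; omega
  -- OOEE
  · exact ⟨A + C, A - C, B + E, B - E, hA.add_even hC, hA.sub_even hC,
      hB.add_even hE, hB.sub_even hE, by linear_combination 2 * hABCE + hN2⟩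
  -- OOEO
  · exfalso
    obtain ⟨u1, e1⟩ := sq_of_odd hA; obtain ⟨u2, e2⟩ := sq_of_odd hB
    obtain ⟨u3, e3⟩ := sq_of_even hC; obtain ⟨u4, e4⟩ := sq_of_odd hE
    rw [e1, e2, e3, e4] at hABCE; omega
  -- OOOE
  · exfalso
    obtain ⟨u1, e1⟩ := sq_of_odd hA; obtain ⟨u2, e2⟩ := sq_of_odd hB
    obtain ⟨u3, e3⟩ := sq_of_odd hC; obtain ⟨u4, e4⟩ := sq_of_even hE
    rw [e1, e2, e3, e4] at hABCE; omega
  -- OOOO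
  · exfalso
    obtain ⟨u1, e1⟩ := sq_of_odd hA; obtain ⟨u2, e2⟩ := sq_of_odd hB
    obtain ⟨u3, e3⟩ := sq_of_odd hC; obtain ⟨u4, e4⟩ := sq_of_odd hE
    rw [e1, e2, e3, e4] at hABCE; omega

lemma sign_fix {w t : ℤ} (hw : Odd w) (ht : Odd t) : ∃ c : ℤ, (4 * c + t) ^ 2 = w ^ 2 := by
  obtain ⟨k, hk⟩ := hw; obtain ⟨l, hl⟩ := ht
  rcases Int.even_or_odd (k + l) with ⟨j, hj⟩ | ⟨j, hj⟩
  · refine ⟨j - l, ?_⟩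
    have h : 4 * (j - l) + t = w := by omega
    rw [h]
  · refine ⟨-(j + 1), ?_⟩
    have h : 4 * (-(j + 1)) + t = -w := by omega
    rw [h]; ring

/-- Key representation lemma: if `t1,…,t4` are odd, `R` is even, and
`4R + Σ tᵢ² ≥ 0`, then `R = Σ (4cᵢ² + 2tᵢcᵢ)` for some integers `cᵢ`. -/
lemma repair (t1 t2 t3 t4 R : ℤ) (h1 : Odd t1) (h2 : Odd t2) (h3 : Odd t3) (h4 : Odd t4)
    (hR : Even R) (hpos : 0 ≤ 4 * R + (t1 ^ 2 + t2 ^ 2 + t3 ^ 2 + t4 ^ 2)) :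
    ∃ c1 c2 c3 c4 : ℤ,
      4 * (c1 ^ 2 + c2 ^ 2 + c3 ^ 2 + c4 ^ 2) +
        2 * (t1 * c1 + t2 * c2 + t3 * c3 + t4 * c4) = R := by
  obtain ⟨RR, hRR⟩ := hR
  obtain ⟨s1, hs1⟩ := sq8_of_odd h1
  obtain ⟨s2, hs2⟩ := sq8_of_odd h2
  obtain ⟨s3, hs3⟩ := sq8_of_odd h3
  obtain ⟨s4, hs4⟩ := sq8_of_odd h4
  have h8 : (4 * R + (t1 ^ 2 + t2 ^ 2 + t3 ^ 2 + t4 ^ 2)) % 8 = 4 := by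
    have hval : 4 * R + (t1 ^ 2 + t2 ^ 2 + t3 ^ 2 + t4 ^ 2)
        = 8 * (RR + s1 + s2 + s3 + s4) + 4 := by
      linear_combination 4 * hRR + hs1 + hs2 + hs3 + hs4
    omega
  obtain ⟨w1, w2, w3, w4, o1, o2, o3, o4, hw⟩ := odd_four_squares _ hpos h8
  obtain ⟨c1, e1⟩ := sign_fix o1 h1
  obtain ⟨c2, e2⟩ := sign_fix o2 h2
  obtain ⟨c3, e3⟩ := sign_fix o3 h3
  obtain ⟨c4, e4⟩ := sign_fix o4 h4
  refine ⟨c1, c2, c3, c4, ?_⟩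
  have H : 4 * (4 * (c1 ^ 2 + c2 ^ 2 + c3 ^ 2 + c4 ^ 2) +
      2 * (t1 * c1 + t2 * c2 + t3 * c3 + t4 * c4)) = 4 * R := by
    linear_combination e1 + e2 + e3 + e4 + hw
  linarith

/-- if `d ≥ 9` is odd and `4n ≥ d³ + 3d − 4` (`n ≥ 1`), then there are integers
`x_1, …, x_d` with `x_1 + ⋯ + x_d = 0` and `2n = ∑_{i=1}^{d} (d·x_i² + 2(i−1)·x_i)`
(indices `0`-based below, so `i - 1` becomes `i`). -/
theorem kiming_diophantine
    (d : ℕ) (n : ℤ) (hd9 : 9 ≤ d) (hdodd : Odd d) (hn : 1 ≤ n)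
    (hbound : (d : ℤ) ^ 3 + 3 * d - 4 ≤ 4 * n) :
    ∃ x : Fin d → ℤ, (∑ i, x i) = 0 ∧
      2 * n = ∑ i : Fin d, ((d : ℤ) * (x i) ^ 2 + 2 * ((i : ℕ) : ℤ) * x i) := by
  have hD9 : (9 : ℤ) ≤ (d : ℤ) := by exact_mod_cast hd9
  obtain ⟨dk, hdk⟩ := hdodd
  have hDodd : (d : ℤ) = 2 * (dk : ℤ) + 1 := by exact_mod_cast hdk
  have hDpos : (0 : ℤ) < (d : ℤ) := by linarith
  obtain ⟨q, m0, hq, hm0a, hm0b⟩ :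
      ∃ q m0 : ℤ, (d : ℤ) * q + m0 = -(n + 1) ∧ 0 ≤ m0 ∧ m0 < (d : ℤ) :=
    ⟨(-(n + 1)) / (d : ℤ), (-(n + 1)) % (d : ℤ), Int.mul_ediv_add_emod _ _,
      Int.emod_nonneg _ (by omega), Int.emod_lt_of_pos _ hDpos⟩
  obtain ⟨m, K, hK, hm1, hm2⟩ :
      ∃ m K : ℤ, n + m + 1 = (d : ℤ) * K ∧ 1 - (d : ℤ) ≤ 2 * m ∧ 2 * m ≤ (d : ℤ) - 1 := by
    by_cases hcase : 2 * m0 + 1 ≤ (d : ℤ)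
    · exact ⟨m0, -q, by linear_combination hq, by omega, by omega⟩
    · exact ⟨m0 - (d : ℤ), -q - 1, by linear_combination hq, by omega, by omega⟩
  obtain ⟨a, b, ha1, ha2, hab⟩ : ∃ a b : ℤ, -2 ≤ a ∧ a ≤ 2 ∧ 5 * b = m - 3 * a := by
    by_cases hcase : (2 * m) % 5 ≤ 2
    · exact ⟨(2 * m) % 5, (m - 3 * ((2 * m) % 5)) / 5, by omega, by omega,
        Int.mul_ediv_cancel' (by omega)⟩
    · exact ⟨(2 * m) % 5 - 5, (m - 3 * ((2 * m) % 5 - 5)) / 5, by omega, by omega,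
        Int.mul_ediv_cancel' (by omega)⟩
  have hb1 : 10 * b ≤ (d : ℤ) + 11 := by linarith
  have hb2 : -((d : ℤ) + 11) ≤ 10 * b := by linarith
  have key : (d : ℤ) * (a ^ 2 + b ^ 2 + a - b + 1) ≤ 2 * (n + m + 1) := by
    nlinarith [hbound, hm1, hD9,
      mul_nonneg (mul_nonneg (by linarith : (0:ℤ) ≤ (d:ℤ) - 9) (by linarith : (0:ℤ) ≤ (d:ℤ)))
        (by linarith : (0:ℤ) ≤ (d:ℤ)),
      mul_nonneg (by linarith : (0:ℤ) ≤ (d:ℤ) - 9) (by linarith : (0:ℤ) ≤ (d:ℤ)),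
      mul_nonneg (by linarith : (0:ℤ) ≤ (d:ℤ))
        (mul_nonneg (by linarith : (0:ℤ) ≤ (d:ℤ) + 11 - 10 * b)
          (by linarith : (0:ℤ) ≤ (d:ℤ) + 11 + 10 * b)),
      mul_nonneg (by linarith : (0:ℤ) ≤ (d:ℤ))
        (mul_nonneg (by linarith : (0:ℤ) ≤ 2 - a) (by linarith : (0:ℤ) ≤ 2 + a)),
      mul_nonneg (by linarith : (0:ℤ) ≤ (d:ℤ)) (by linarith : (0:ℤ) ≤ (d:ℤ) + 11 + 10 * b),
      mul_nonneg (by linarith : (0:ℤ) ≤ (d:ℤ)) (by linarith : (0:ℤ) ≤ 2 - a)]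
  have h' : 0 ≤ (d : ℤ) * (2 * K - (a ^ 2 + b ^ 2 + a - b + 1)) := by nlinarith [key, hK]
  have hQ : 0 ≤ 2 * K - (a ^ 2 + b ^ 2 + a - b + 1) := by
    rcases le_or_gt 0 (2 * K - (a ^ 2 + b ^ 2 + a - b + 1)) with h | h
    · exact h
    · exfalso
      nlinarith [h', mul_le_mul_of_nonneg_left
        (by linarith : 2 * K - (a ^ 2 + b ^ 2 + a - b + 1) ≤ -1)
        (by linarith : (0:ℤ) ≤ (d:ℤ))]
  have hpos : 0 ≤ 4 * (2 * K - (2 * a ^ 2 + 2 * b ^ 2 - 2 * b + 2)) +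
      ((1:ℤ) ^ 2 + (2 * a - 1) ^ 2 + (-1:ℤ) ^ 2 + (2 * b - 1) ^ 2) := by nlinarith [hQ]
  obtain ⟨c1, c2, c3, c4, hc⟩ :=
    repair 1 (2 * a - 1) (-1) (2 * b - 1) (2 * K - (2 * a ^ 2 + 2 * b ^ 2 - 2 * b + 2))
      ⟨0, by ring⟩ ⟨a - 1, by ring⟩ ⟨-1, by ring⟩ ⟨b - 1, by ring⟩
      ⟨K - (a ^ 2 + b ^ 2 - b + 1), by ring⟩ hpos
  refine ⟨fun i => kimX a b c1 c2 c3 c4 i.val, ?_, ?_⟩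
  · show (∑ i : Fin d, kimX a b c1 c2 c3 c4 i.val) = 0
    rw [Fin.sum_univ_eq_sum_range (fun j => kimX a b c1 c2 c3 c4 j) d]
    rw [← Finset.sum_subset (Finset.range_subset_range.mpr (by omega : 8 ≤ d))
      (fun j _ hj => kimX_eq_zero a b c1 c2 c3 c4 (by simp [Finset.mem_range] at hj; omega))]
    rw [Finset.sum_range_succ, Finset.sum_range_succ, Finset.sum_range_succ,
      Finset.sum_range_succ, Finset.sum_range_succ, Finset.sum_range_succ,
      Finset.sum_range_succ, Finset.sum_range_succ, Finset.sum_range_zero]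
    norm_num [kimX]
    ring
  · show 2 * n = ∑ i : Fin d,
      ((d : ℤ) * (kimX a b c1 c2 c3 c4 i.val) ^ 2 + 2 * (i.val : ℤ) * kimX a b c1 c2 c3 c4 i.val)
    rw [Fin.sum_univ_eq_sum_range
      (fun j => (d : ℤ) * (kimX a b c1 c2 c3 c4 j) ^ 2 + 2 * (j : ℤ) * kimX a b c1 c2 c3 c4 j) d]
    rw [← Finset.sum_subset (Finset.range_subset_range.mpr (by omega : 8 ≤ d))
      (fun j _ hj => by
        rw [kimX_eq_zero a b c1 c2 c3 c4 (by simp [Finset.mem_range] at hj; omega)]; ring)]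
    rw [Finset.sum_range_succ, Finset.sum_range_succ, Finset.sum_range_succ,
      Finset.sum_range_succ, Finset.sum_range_succ, Finset.sum_range_succ,
      Finset.sum_range_succ, Finset.sum_range_succ, Finset.sum_range_zero]
    norm_num [kimX]
    linear_combination (-(d : ℤ)) * hc + 2 * hK + 2 * hab
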